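/- For every m ∈ ℕ there exists a countably infinite tournament W with i(W) = m such that every tournament T on an at most countable vertex set with i(T) ≤ m embeds into W (W is universal for the class of at most countable tournaments of inversion index at most m). -/

import Mathlib

/-- A tournament on a vertex set `V`: a loopless directed graph such that for all
distinct `x, y` exactly one of `(x,y)`, `(y,x)` is an arc. -/
structure Tournament (V : Type*) where
  rel : V → V → Prop
  irrefl : ∀ x, ¬ rel x x
  total : ∀ x y, x ≠ y → rel x y ∨ rel y x
  asymm : ∀ x y, rel x y → ¬ rel y x

namespace Tournament

variable {V : Type*} {W : Type*}

/-- The tournament obtained from `T` by reversing all arcs both of whose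
endpoints lie in `X`. -/
def inv (T : Tournament V) (X : Set V) : Tournament V where
  rel x y := (x ∈ X ∧ y ∈ X ∧ T.rel y x) ∨ ((x ∉ X ∨ y ∉ X) ∧ T.rel x y)
  irrefl x := by have := T.irrefl x; tauto
  total x y hxy := by
    have := T.total x y hxy
    by_cases hx : x ∈ X <;> by_cases hy : y ∈ X <;> tauto
  asymm x y := by have h1 := T.asymm x y; have h2 := T.asymm y x; tauto

/-- Successive inversions along a finite sequence of subsets (`X_0` first). -/
def invSeq (T : Tournament V) (Xs : List (Set V)) : Tournament V :=
  Xs.foldl Tournament.inv T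

/-- A tournament is acyclic (transitive) when its arc relation is transitive,
i.e. a strict linear order. -/
def IsAcyclic (T : Tournament V) : Prop :=
  ∀ x y z, T.rel x y → T.rel y z → T.rel x z

/-- The inversion index: the least number of subsets to be inverted to reach an
acyclic tournament. -/
noncomputable def index (T : Tournament V) : ℕ :=
  sInf {m | ∃ Xs : List (Set V), Xs.length = m ∧ (T.invSeq Xs).IsAcyclic}

/-- Induced subtournament on a set of vertices. -/
def restrict (T : Tournament V) (A : Set V) : Tournament A where
  rel x y := T.rel x y
  irrefl x := T.irrefl x
  total x y hxy := T.total x y (fun h => hxy (Subtype.ext h))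
  asymm x y := T.asymm x y

/-- `T − x`: the subtournament induced on `V ∖ {x}`. -/
def erase (T : Tournament V) (x : V) : Tournament {y : V // y ≠ x} :=
  T.restrict {y | y ≠ x}

/-- `S` embeds into `T`: `S` is isomorphic to the subtournament of `T` induced on
some subset of the vertices of `T`. -/
def Embeds (S : Tournament V) (T : Tournament W) : Prop :=
  ∃ f : V → W, Function.Injective f ∧ ∀ x y, S.rel x y ↔ T.rel (f x) (f y)

/-- Isomorphism of tournaments. -/
def Iso (S : Tournament V) (T : Tournament W) : Prop :=
  ∃ e : V ≃ W, ∀ x y, S.rel x y ↔ T.rel (e x) (e y)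

/-- The dual tournament, obtained by reversing all arcs. -/
def dual (T : Tournament V) : Tournament V where
  rel x y := T.rel y x
  irrefl x := T.irrefl x
  total x y hxy := (T.total x y hxy).symm
  asymm x y h := T.asymm y x h

/-- `X` is an interval of `T`. -/
def IsInterval (T : Tournament V) (X : Set V) : Prop :=
  ∀ y ∉ X, (∀ x ∈ X, T.rel x y) ∨ (∀ x ∈ X, T.rel y x)

/-- A tournament is indecomposable when all its intervals are trivial. -/
def Indecomposable (T : Tournament V) : Prop :=
  ∀ X : Set V, T.IsInterval X → X = ∅ ∨ X = Set.univ ∨ ∃ x, X = {x}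

end Tournament

/-- The transitive tournament `n̲` on `{0, …, n−1}`, with arcs `(i,j)` for `i < j`. -/
def linear (n : ℕ) : Tournament (Fin n) where
  rel x y := x < y
  irrefl x := lt_irrefl x
  total _ _ h := lt_or_gt_of_ne h
  asymm _ _ h := lt_asymm h

/-- `2ℕ_{<k} = {0, 2, …, 2(k−1)}` as a subset of `Fin N`. -/
def evensLT {N : ℕ} (k : ℕ) : Set (Fin N) := {i | (i : ℕ) % 2 = 0 ∧ (i : ℕ) < 2 * k}

/-- `2ℕ_{<k}+1 = {1, 3, …, 2k−1}` as a subset of `Fin N`. -/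
def oddsLT {N : ℕ} (k : ℕ) : Set (Fin N) := {i | (i : ℕ) % 2 = 1 ∧ (i : ℕ) < 2 * k}

namespace Tournament

/-- The inversion index with values in `ℕ∞`: it is `⊤` (infinite) when no finite
sequence of inversions makes the tournament acyclic. -/
noncomputable def indexE {V : Type*} (T : Tournament V) : ℕ∞ :=
  sInf {n : ℕ∞ | ∃ Xs : List (Set V), (Xs.length : ℕ∞) = n ∧ (T.invSeq Xs).IsAcyclic}

end Tournament

namespace Univ19
open Tournament

variable {V : Type*} {W : Type*}

theorem tour_ext {S T : Tournament V} (h : S.rel = T.rel) : S = T := by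
  cases S; cases T; cases h; rfl

theorem invSeq_nil (T : Tournament V) : T.invSeq [] = T := rfl

theorem invSeq_cons (T : Tournament V) (X : Set V) (Xs : List (Set V)) :
    T.invSeq (X :: Xs) = (T.inv X).invSeq Xs := rfl

theorem invSeq_append (T : Tournament V) (l1 l2 : List (Set V)) :
    T.invSeq (l1 ++ l2) = (T.invSeq l1).invSeq l2 :=
  List.foldl_append

theorem inv_rel (T : Tournament V) (X : Set V) (x y : V) :
    (T.inv X).rel x y ↔ (x ∈ X ∧ y ∈ X ∧ T.rel y x) ∨ ((x ∉ X ∨ y ∉ X) ∧ T.rel x y) :=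
  Iff.rfl

theorem inv_inv (T : Tournament V) (X : Set V) : (T.inv X).inv X = T := by
  apply tour_ext; funext x y; apply propext
  simp only [inv_rel]
  tauto

theorem inv_empty (T : Tournament V) : T.inv ∅ = T := by
  apply tour_ext; funext x y; apply propext
  simp only [inv_rel]
  simp only [Set.mem_empty_iff_false]
  tauto

theorem invSeq_invSeq_reverse (T : Tournament V) (Xs : List (Set V)) :
    (T.invSeq Xs).invSeq Xs.reverse = T := by
  induction Xs generalizing T with
  | nil => rfl
  | cons X Xs ih =>
    rw [invSeq_cons, List.reverse_cons, invSeq_append, ih]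
    show ((T.inv X).invSeq []).inv X = T
    rw [invSeq_nil, inv_inv]

/-- `T` can be made acyclic by `n` inversions. -/
def HasIdx (T : Tournament V) (n : ℕ) : Prop :=
  ∃ Xs : List (Set V), Xs.length = n ∧ (T.invSeq Xs).IsAcyclic

theorem HasIdx.succ {T : Tournament V} {n : ℕ} (h : HasIdx T n) : HasIdx T (n + 1) := by
  obtain ⟨Xs, hl, ha⟩ := h
  exact ⟨Xs ++ [∅], by simp [hl], by
    rw [invSeq_append]
    show ((T.invSeq Xs).inv ∅).IsAcyclic
    rwa [inv_empty]⟩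

theorem HasIdx.mono {T : Tournament V} {n k : ℕ} (hnk : n ≤ k) (h : HasIdx T n) : HasIdx T k := by
  induction hnk with
  | refl => exact h
  | step _ ih => exact ih.succ

theorem indexE_le_of_hasIdx {T : Tournament V} {k : ℕ} (h : HasIdx T k) :
    T.indexE ≤ (k : ℕ∞) := by
  obtain ⟨Xs, hl, ha⟩ := h
  exact sInf_le ⟨Xs, by rw [hl], ha⟩

theorem hasIdx_of_indexE_le {T : Tournament V} {k : ℕ} (h : T.indexE ≤ (k : ℕ∞)) :
    HasIdx T k := by
  have hne : {n : ℕ | HasIdx T n}.Nonempty := by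
    by_contra hc
    rw [Set.not_nonempty_iff_eq_empty] at hc
    have : {n : ℕ∞ | ∃ Xs : List (Set V), (Xs.length : ℕ∞) = n ∧ (T.invSeq Xs).IsAcyclic} = ∅ := by
      ext n
      simp only [Set.mem_setOf_eq, Set.mem_empty_iff_false, iff_false]
      rintro ⟨Xs, hl, ha⟩
      have : Xs.length ∈ {n : ℕ | HasIdx T n} := ⟨Xs, rfl, ha⟩
      rw [hc] at this; exact this
    rw [Tournament.indexE, this, sInf_empty] at h
    exact absurd h (by simp)
  set n₀ := sInf {n : ℕ | HasIdx T n} with hn₀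
  have hmem : HasIdx T n₀ := Nat.sInf_mem hne
  have hle : (n₀ : ℕ∞) ≤ T.indexE := by
    apply le_sInf
    rintro b ⟨Xs, hl, ha⟩
    rw [← hl]
    have : n₀ ≤ Xs.length := Nat.sInf_le ⟨Xs, rfl, ha⟩
    exact_mod_cast this
  have : (n₀ : ℕ∞) ≤ (k : ℕ∞) := hle.trans h
  exact hmem.mono (by exact_mod_cast this)

/-- Rel after a sequence of inversions only depends on pairwise data. -/
theorem invSeq_rel_congr {x y : V} {x' y' : W} :
    ∀ {Xs : List (Set V)} {Xs' : List (Set W)},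
      List.Forall₂ (fun (X : Set V) (X' : Set W) => (x ∈ X ↔ x' ∈ X') ∧ (y ∈ X ↔ y' ∈ X')) Xs Xs' →
      ∀ {S : Tournament V} {U : Tournament W},
        (S.rel x y ↔ U.rel x' y') → (S.rel y x ↔ U.rel y' x') →
        ((S.invSeq Xs).rel x y ↔ (U.invSeq Xs').rel x' y') := by
  intro Xs Xs' h
  induction h with
  | nil => intro S U h1 _; exact h1
  | @cons X X' Xs Xs' hXX _ ih =>
    intro S U h1 h2
    rw [invSeq_cons, invSeq_cons]
    exact ih (by simp only [inv_rel]; tauto) (by simp only [inv_rel]; tauto)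


open scoped Classical in
/-- The set of "bad" pairs of a tournament on `Fin n`. -/
noncomputable def bad {n : ℕ} (T : Tournament (Fin n)) : Finset (Fin n × Fin n) :=
  Finset.univ.filter (fun p => p.1 < p.2 ∧ T.rel p.2 p.1)

theorem mem_bad {n : ℕ} (T : Tournament (Fin n)) (p : Fin n × Fin n) :
    p ∈ bad T ↔ p.1 < p.2 ∧ T.rel p.2 p.1 := by
  classical
  simp [bad]

theorem acyclic_of_bad_empty {n : ℕ} {T : Tournament (Fin n)} (h : bad T = ∅) :
    T.IsAcyclic := by
  have key : ∀ x y : Fin n, T.rel x y ↔ x < y := by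
    intro x y
    constructor
    · intro hr
      rcases lt_trichotomy x y with h1 | h1 | h1
      · exact h1
      · exact absurd hr (h1 ▸ T.irrefl x)
      · exact absurd ((mem_bad T (y, x)).mpr ⟨h1, hr⟩) (by simp [h])
    · intro hlt
      have hne : x ≠ y := ne_of_lt hlt
      rcases T.total x y hne with h1 | h1
      · exact h1
      · exact absurd ((mem_bad T (x, y)).mpr ⟨hlt, h1⟩) (by simp [h])
  intro x y z h1 h2
  rw [key] at *
  exact h1.trans h2

theorem bad_inv {n : ℕ} {T : Tournament (Fin n)} {x y : Fin n} (hxy : x < y)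
    (hbad : (x, y) ∈ bad T) :
    bad (T.inv {x, y}) = (bad T).erase (x, y) := by
  ext p
  obtain ⟨a, b⟩ := p
  rw [mem_bad, Finset.mem_erase, mem_bad]
  simp only [inv_rel, Set.mem_insert_iff, Set.mem_singleton_iff]
  rw [mem_bad] at hbad
  constructor
  · rintro ⟨hab, hrel⟩
    refine ⟨?_, hab, ?_⟩
    · intro hpq
      rw [Prod.mk.injEq] at hpq
      obtain ⟨rfl, rfl⟩ := hpq
      rcases hrel with ⟨_, _, hr⟩ | ⟨hmem, hr⟩
      · exact T.asymm _ _ hbad.2 hr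
      · tauto
    · -- show T.rel b a
      rcases hrel with ⟨hb, ha, hr⟩ | ⟨_, hr⟩
      · -- both a b in {x,y}, a ≠ b, a < b, x < y forces (a,b) = (x,y)
        exfalso
        have hne : a ≠ b := ne_of_lt hab
        rcases ha with rfl | rfl <;> rcases hb with rfl | rfl
        · exact hne rfl
        · exact T.asymm _ _ hbad.2 hr
        · exact absurd hab (lt_asymm hxy)
        · exact hne rfl
      · exact hr
  · rintro ⟨hne, hab, hrel⟩
    refine ⟨hab, ?_⟩
    right
    constructor
    · -- not both in {x, y}
      by_contra hc
      push_neg at hc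
      obtain ⟨hb, ha⟩ := hc
      have hab' : a ≠ b := ne_of_lt hab
      rcases ha with rfl | rfl <;> rcases hb with rfl | rfl
      · exact hab' rfl
      · exact hne rfl
      · exact absurd hab (lt_asymm hxy)
      · exact hab' rfl
    · exact hrel

theorem exists_hasIdx {n : ℕ} (T : Tournament (Fin n)) : ∃ k, HasIdx T k := by
  generalize hN : (bad T).card = N
  induction N using Nat.strong_induction_on generalizing T with
  | _ N ih =>
    rcases Finset.eq_empty_or_nonempty (bad T) with he | ⟨⟨x, y⟩, hp⟩
    · exact ⟨0, [], rfl, acyclic_of_bad_empty he⟩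
    · have hxy : x < y := ((mem_bad T _).mp hp).1
      have hcard : (bad (T.inv {x, y})).card < N := by
        rw [bad_inv hxy hp, ← hN]
        exact Finset.card_erase_lt_of_mem hp
      obtain ⟨k, Xs, hl, ha⟩ := ih _ hcard (T.inv {x, y}) rfl
      exact ⟨k + 1, {x, y} :: Xs, by simp [hl], ha⟩

/-- The (finite) inversion index of a tournament on `Fin n`. -/
noncomputable def fidx {n : ℕ} (T : Tournament (Fin n)) : ℕ :=
  sInf {k | HasIdx T k}

theorem hasIdx_fidx {n : ℕ} (T : Tournament (Fin n)) : HasIdx T (fidx T) := by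
  obtain ⟨k, hk⟩ := exists_hasIdx T
  exact Nat.sInf_mem (s := {k | HasIdx T k}) ⟨k, hk⟩

theorem fidx_le {n : ℕ} {T : Tournament (Fin n)} {k : ℕ} (h : HasIdx T k) : fidx T ≤ k :=
  Nat.sInf_le (s := {k | HasIdx T k}) h

theorem fidx_le_inv_add_one {n : ℕ} (T : Tournament (Fin n)) (X : Set (Fin n)) :
    fidx T ≤ fidx (T.inv X) + 1 := by
  obtain ⟨Xs, hl, ha⟩ := hasIdx_fidx (T.inv X)
  exact fidx_le ⟨X :: Xs, by simp [hl], ha⟩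

theorem exists_fidx_eq {n m : ℕ} (T : Tournament (Fin n)) (h : m ≤ fidx T) :
    ∃ T₀ : Tournament (Fin n), fidx T₀ = m := by
  generalize hN : (bad T).card = N
  induction N using Nat.strong_induction_on generalizing T with
  | _ N ih =>
    rcases eq_or_lt_of_le h with heq | hlt
    · exact ⟨T, heq.symm⟩
    · rcases Finset.eq_empty_or_nonempty (bad T) with he | ⟨⟨x, y⟩, hp⟩
      · have : fidx T = 0 := Nat.le_zero.mp (fidx_le ⟨[], rfl, acyclic_of_bad_empty he⟩)
        omega
      · have hxy : x < y := ((mem_bad T _).mp hp).1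
        have hcard : (bad (T.inv {x, y})).card < N := by
          rw [bad_inv hxy hp, ← hN]
          exact Finset.card_erase_lt_of_mem hp
        have hge : m ≤ fidx (T.inv {x, y}) := by
          have := fidx_le_inv_add_one T {x, y}
          omega
        exact ih _ hcard _ hge rfl


/-- Tournament encoded by a Boolean function on ordered pairs. -/
def theta {n : ℕ} (b : {p : Fin n × Fin n // p.1 < p.2} → Bool) : Tournament (Fin n) where
  rel x y := (∃ h : x < y, b ⟨(x, y), h⟩ = true) ∨ (∃ h : y < x, b ⟨(y, x), h⟩ = false)
  irrefl x := by rintro (⟨h, _⟩ | ⟨h, _⟩) <;> exact lt_irrefl x h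
  total x y hxy := by
    rcases lt_or_gt_of_ne hxy with h | h
    · cases hb : b ⟨(x, y), h⟩
      · exact Or.inr (Or.inr ⟨h, hb⟩)
      · exact Or.inl (Or.inl ⟨h, hb⟩)
    · cases hb : b ⟨(y, x), h⟩
      · exact Or.inl (Or.inr ⟨h, hb⟩)
      · exact Or.inr (Or.inl ⟨h, hb⟩)
  asymm x y := by
    rintro (⟨h1, hb1⟩ | ⟨h1, hb1⟩) (⟨h2, hb2⟩ | ⟨h2, hb2⟩)
    · exact lt_asymm h1 h2
    · exact Bool.noConfusion (hb1.symm.trans hb2)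
    · exact Bool.noConfusion (hb2.symm.trans hb1)
    · exact lt_asymm h1 h2

theorem theta_rel_true {n : ℕ} (b : {p : Fin n × Fin n // p.1 < p.2} → Bool)
    {x y : Fin n} (hxy : x < y) : (theta b).rel x y ↔ b ⟨(x, y), hxy⟩ = true := by
  constructor
  · rintro (⟨h1, hb⟩ | ⟨h1, hb⟩)
    · exact hb
    · exact absurd h1 (lt_asymm hxy)
  · intro hb
    exact Or.inl ⟨hxy, hb⟩

theorem theta_injective {n : ℕ} : Function.Injective (theta (n := n)) := by
  intro b b' h
  funext p
  obtain ⟨⟨x, y⟩, hxy⟩ := p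
  have h1 := theta_rel_true b hxy
  have h2 := theta_rel_true b' hxy
  rw [h] at h1
  have : b ⟨(x, y), hxy⟩ = true ↔ b' ⟨(x, y), hxy⟩ = true := h1.symm.trans h2
  cases hb : b ⟨(x, y), hxy⟩ <;> cases hb' : b' ⟨(x, y), hxy⟩ <;> simp_all

/-- The transitive tournament induced by a permutation. -/
def permLin {n : ℕ} (σ : Equiv.Perm (Fin n)) : Tournament (Fin n) where
  rel x y := σ x < σ y
  irrefl x := lt_irrefl _
  total x y hxy := lt_or_gt_of_ne (fun hc => hxy (σ.injective hc))
  asymm x y := lt_asymm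

/-- Sets encoded by a Boolean matrix. -/
def listOf {n j : ℕ} (c : Fin n → Fin j → Bool) : List (Set (Fin n)) :=
  (List.finRange j).map fun i => {v | c v i = true}

def Phi {n j : ℕ} (σ : Equiv.Perm (Fin n)) (c : Fin n → Fin j → Bool) : Tournament (Fin n) :=
  (permLin σ).invSeq (listOf c)

/-- Type synonym to carry a different linear order. -/
def Syn (n : ℕ) : Type := Fin n

instance (n : ℕ) : Fintype (Syn n) := inferInstanceAs (Fintype (Fin n))

theorem phi_surj {n j : ℕ} (T : Tournament (Fin n)) (h : HasIdx T j) :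
    ∃ σ c, Phi (n := n) (j := j) σ c = T := by
  obtain ⟨Xs, hl, ha⟩ := h
  set A := T.invSeq Xs with hA
  haveI hsto : IsStrictTotalOrder (Syn n) (fun a b => A.rel a b) :=
    { trichotomous := by
        intro a b hab hba
        by_contra hne
        rcases A.total a b hne with h1 | h1
        · exact hab h1
        · exact hba h1
      irrefl := fun a => A.irrefl a
      trans := fun a b c h1 h2 => ha a b c h1 h2 }
  letI : DecidableRel (fun a b : Syn n => A.rel a b) := Classical.decRel _
  letI lo : LinearOrder (Syn n) := linearOrderOfSTO (fun a b => A.rel a b)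
  have hcard : Fintype.card (Syn n) = n :=
    (Fintype.card_congr (show Syn n ≃ Fin n from Equiv.refl _)).trans (Fintype.card_fin n)
  let eIso : Fin n ≃o Syn n := Fintype.orderIsoFinOfCardEq (Syn n) hcard
  let σ : Equiv.Perm (Fin n) := eIso.symm.toEquiv
  have hrel : ∀ x y : Fin n, A.rel x y ↔ σ x < σ y := by
    intro x y
    exact ((eIso.symm.lt_iff_lt (x := x) (y := y))).symm
  have hAeq : permLin σ = A := by
    apply tour_ext
    funext x y
    exact propext ((hrel x y).symm)
  set Ys := Xs.reverse with hYs
  have hYl : Ys.length = j := by simp [hYs, hl]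
  let c : Fin n → Fin j → Bool := fun v i =>
    @decide (v ∈ Ys.get (Fin.cast hYl.symm i)) (Classical.propDecidable _)
  refine ⟨σ, c, ?_⟩
  have hlist : listOf c = Ys := by
    apply List.ext_get
    · simp [listOf, hYl]
    · intro i h1 h2
      simp only [listOf, List.get_eq_getElem, List.getElem_map, List.getElem_finRange]
      ext v
      simp only [Set.mem_setOf_eq, decide_eq_true_eq, c]
      rfl
  rw [Phi, hlist, hAeq, hYs, hA, invSeq_invSeq_reverse]

theorem two_pow_pos' (a : ℕ) : 0 < 2 ^ a := pow_pos (by norm_num) a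


def flagF {N k : ℕ} (hNk : N = k + k) (b : Fin k × Fin k → Bool) (u v : Fin N) : Bool :=
  if h : (u : ℕ) < k ∧ k ≤ (v : ℕ) then
    b (⟨(u : ℕ), h.1⟩, ⟨(v : ℕ) - k, by have := v.isLt; omega⟩)
  else true

def Theta {N k : ℕ} (hNk : N = k + k) (b : Fin k × Fin k → Bool) : Tournament (Fin N) :=
  theta (fun p => flagF hNk b p.1.1 p.1.2)

theorem Theta_injective {N k : ℕ} (hNk : N = k + k) :
    Function.Injective (Theta hNk) := by
  intro b b' h
  funext p
  obtain ⟨a, c⟩ := p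
  have hak : (a : ℕ) < k := a.isLt
  have hck : (c : ℕ) < k := c.isLt
  set x : Fin N := ⟨(a : ℕ), by omega⟩ with hx
  set y : Fin N := ⟨k + (c : ℕ), by omega⟩ with hy
  have hxy : x < y := by rw [hx, hy, Fin.mk_lt_mk]; omega
  have hiff : (theta (fun p => flagF hNk b p.1.1 p.1.2)).rel x y ↔
      (theta (fun p => flagF hNk b' p.1.1 p.1.2)).rel x y := by
    rw [show theta (fun p => flagF hNk b p.1.1 p.1.2)
          = theta (fun p => flagF hNk b' p.1.1 p.1.2) from h]
  rw [theta_rel_true _ hxy, theta_rel_true _ hxy] at hiff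
  have hcond : (x : ℕ) < k ∧ k ≤ (y : ℕ) := ⟨hak, by simp [hy]⟩
  have e1 : flagF hNk b x y = b (a, c) := by
    rw [flagF, dif_pos hcond]
    congr 1
    refine Prod.ext (Fin.ext ?_) (Fin.ext ?_) <;> simp [hx, hy]
  have e2 : flagF hNk b' x y = b' (a, c) := by
    rw [flagF, dif_pos hcond]
    congr 1
    refine Prod.ext (Fin.ext ?_) (Fin.ext ?_) <;> simp [hx, hy]
  rw [e1, e2] at hiff
  cases hb : b (a, c) <;> cases hb' : b' (a, c) <;> simp_all

theorem count_main (j k N : ℕ) (hNk : N = k + k)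
    (hbig : (2 * j + 6) * N < k * k)
    (hNN : N ^ N ≤ 2 ^ ((j + 6) * N)) :
    ∃ T : Tournament (Fin N), ¬ HasIdx T j := by
  by_contra hc
  push_neg at hc
  have hsurj : ∀ b : Fin k × Fin k → Bool,
      ∃ d : Equiv.Perm (Fin N) × (Fin N → Fin j → Bool), Phi d.1 d.2 = Theta hNk b := by
    intro b
    obtain ⟨σ, c, hs⟩ := phi_surj (Theta hNk b) (hc (Theta hNk b))
    exact ⟨(σ, c), hs⟩
  have hinj : Function.Injective (fun b => (hsurj b).choose) := by
    intro b b' h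
    simp only at h
    apply Theta_injective hNk
    rw [← (hsurj b).choose_spec, ← (hsurj b').choose_spec, h]
  have hcard := Fintype.card_le_of_injective _ hinj
  have hB : Fintype.card (Fin k × Fin k → Bool) = 2 ^ (k * k) := by
    simp [Fintype.card_fun]
  have hPerm : Fintype.card (Equiv.Perm (Fin N)) ≤ N ^ N := by
    have h1 := Fintype.card_le_of_injective (fun σ : Equiv.Perm (Fin N) => (σ : Fin N → Fin N))
      (fun σ τ h => Equiv.coe_fn_injective h)
    simpa [Fintype.card_fun] using h1
  have hfn : Fintype.card (Fin N → Fin j → Bool) = 2 ^ (j * N) := by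
    simp [Fintype.card_fun, ← pow_mul]
  have hD : Fintype.card (Equiv.Perm (Fin N) × (Fin N → Fin j → Bool)) ≤ 2 ^ ((2 * j + 6) * N) := by
    rw [Fintype.card_prod, hfn]
    calc Fintype.card (Equiv.Perm (Fin N)) * 2 ^ (j * N)
        ≤ 2 ^ ((j + 6) * N) * 2 ^ (j * N) :=
          Nat.mul_le_mul_right _ (hPerm.trans hNN)
      _ = 2 ^ ((2 * j + 6) * N) := by rw [← pow_add]; ring_nf
  rw [hB] at hcard
  have : 2 ^ (k * k) ≤ 2 ^ ((2 * j + 6) * N) := hcard.trans hD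
  have hle : k * k ≤ (2 * j + 6) * N := (Nat.pow_le_pow_iff_right (by norm_num)).mp this
  omega

theorem exists_not_hasIdx (j : ℕ) :
    ∃ T : Tournament (Fin (2 ^ (j + 6))), ¬ HasIdx T j := by
  apply count_main j (2 ^ (j + 5))
  · rw [pow_succ]; ring
  · have h2 : j + 1 ≤ 2 ^ j := by have := Nat.lt_two_pow_self (n := j); omega
    have hkk : 2 ^ (j + 5) * 2 ^ (j + 5) = 2 ^ (j + 4) * 2 ^ (j + 6) := by
      rw [← pow_add, ← pow_add]
      ring_nf
    rw [hkk]
    have h16 : (16 : ℕ) * 2 ^ j = 2 ^ (j + 4) := by rw [pow_add]; ring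
    have hlt : 2 * j + 6 < 2 ^ (j + 4) := by omega
    have hpos : 0 < 2 ^ (j + 6) := pow_pos (by norm_num) _
    exact (Nat.mul_lt_mul_right hpos).mpr hlt
  · rw [← pow_mul]


theorem exists_fidx_exact (m : ℕ) (hm : 1 ≤ m) :
    ∃ (n : ℕ) (T₀ : Tournament (Fin n)), fidx T₀ = m := by
  obtain ⟨T', hT'⟩ := exists_not_hasIdx (m - 1)
  have hge : m ≤ fidx T' := by
    by_contra hcon
    push_neg at hcon
    exact hT' ((hasIdx_fidx T').mono (by omega))
  obtain ⟨T₀, hT₀⟩ := exists_fidx_eq T' hge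
  exact ⟨_, T₀, hT₀⟩

theorem hasIdx_of_embeds {V W : Type*} {S : Tournament V} {U : Tournament W} {n : ℕ}
    (hemb : S.Embeds U) (h : HasIdx U n) : HasIdx S n := by
  obtain ⟨f, hinj, hrel⟩ := hemb
  obtain ⟨Xs, hl, ha⟩ := h
  refine ⟨Xs.map (fun X => f ⁻¹' X), by simp [hl], ?_⟩
  have key : ∀ a b : V,
      ((S.invSeq (Xs.map (fun X => f ⁻¹' X))).rel a b ↔ (U.invSeq Xs).rel (f a) (f b)) := by
    intro a b
    apply invSeq_rel_congr
    · rw [List.forall₂_map_left_iff]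
      rw [List.forall₂_same]
      intro X _
      exact ⟨Iff.rfl, Iff.rfl⟩
    · exact hrel a b
    · exact hrel b a
  intro x y z h1 h2
  rw [key] at h1 h2 ⊢
  exact ha _ _ _ h1 h2


theorem univ_embed {V : Type*} (T : Tournament V) [Countable V] (m : ℕ)
    (hle : T.indexE ≤ (m : ℕ∞))
    (e : ℕ ≃ ℚ × (Fin m → Bool)) (enc : (Fin m → Bool) → ℕ) (henc : Function.Injective enc)
    (L : Tournament ℕ)
    (hLrel : ∀ p q, L.rel p q ↔
      ((e p).1 < (e q).1 ∨ ((e p).1 = (e q).1 ∧ enc (e p).2 < enc (e q).2)))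
    (Zs : List (Set ℕ))
    (hZs : Zs = (List.finRange m).map fun i => {p | (e p).2 i = true}) :
    T.Embeds (L.invSeq Zs) := by
  classical
  have hZlen : Zs.length = m := by simp [hZs]
  obtain ⟨Xs, hXl, hXa⟩ := hasIdx_of_indexE_le hle
  haveI hsto : IsStrictTotalOrder V (T.invSeq Xs).rel :=
    { trichotomous := fun a b hab hba => by
        by_contra hne
        rcases (T.invSeq Xs).total a b hne with h1 | h1
        · exact hab h1
        · exact hba h1
      irrefl := fun a => (T.invSeq Xs).irrefl a
      trans := fun a b c h1 h2 => hXa a b c h1 h2 }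
  letI : DecidableRel (T.invSeq Xs).rel := Classical.decRel _
  letI lo : LinearOrder V := linearOrderOfSTO (T.invSeq Xs).rel
  obtain ⟨g⟩ := Order.embedding_from_countable_to_dense (α := V) (β := ℚ)
  have hYl : Xs.reverse.length = m := by simp [hXl]
  let c : V → Fin m → Bool := fun v i => decide (v ∈ Xs.reverse.get (Fin.cast hYl.symm i))
  let f : V → ℕ := fun v => e.symm (g v, c v)
  have hef : ∀ v, e (f v) = (g v, c v) := fun v => e.apply_symm_apply _
  have hgf : ∀ v, (e (f v)).1 = g v := fun v => by rw [hef]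
  have hcf : ∀ v, (e (f v)).2 = c v := fun v => by rw [hef]
  have hinj : Function.Injective f := by
    intro u v h
    have h2 := congrArg (fun n => (e n).1) h
    simp only [hgf] at h2
    exact g.injective h2
  have hbase : ∀ x y : V, (T.invSeq Xs).rel x y ↔ L.rel (f x) (f y) := by
    intro x y
    rw [hLrel, hgf, hgf, hcf, hcf]
    constructor
    · intro hr
      exact Or.inl (g.lt_iff_lt.mpr hr)
    · rintro (h | ⟨h, h'⟩)
      · exact g.lt_iff_lt.mp h
      · have hxy : x = y := g.injective h
        subst hxy
        exact absurd h' (lt_irrefl _)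
  have hforall : ∀ x y : V, List.Forall₂
      (fun (X : Set V) (X' : Set ℕ) => (x ∈ X ↔ f x ∈ X') ∧ (y ∈ X ↔ f y ∈ X'))
      Xs.reverse Zs := by
    intro x y
    have hmem : ∀ (v : V) (i : ℕ) (h1 : i < Xs.reverse.length) (h2 : i < Zs.length),
        (v ∈ Xs.reverse.get ⟨i, h1⟩ ↔ f v ∈ Zs.get ⟨i, h2⟩) := by
      intro v i h1 h2
      have h2' : i < m := by rwa [hZlen] at h2
      have hz : f v ∈ Zs.get ⟨i, h2⟩ ↔ (e (f v)).2 ⟨i, h2'⟩ = true := by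
        subst hZs
        simp only [List.get_eq_getElem, List.getElem_map, List.getElem_finRange,
          Set.mem_setOf_eq]
        rfl
      rw [hz, hcf]
      simp only [c, decide_eq_true_eq]
      rfl
    apply List.forall₂_of_length_eq_of_get
    · rw [hYl, hZlen]
    · intro i h1 h2
      exact ⟨hmem x i h1 h2, hmem y i h1 h2⟩
  refine ⟨f, hinj, fun x y => ?_⟩
  conv_lhs => rw [← invSeq_invSeq_reverse T Xs]
  exact invSeq_rel_congr (hforall x y) (hbase x y) (hbase y x)

end Univ19

/-- for every `m` there is a countably infinite tournament `W` of
inversion index `m` into which every tournament on an at most countable vertex set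
of inversion index at most `m` embeds. -/
theorem exists_universal_tournament (m : ℕ) :
    ∃ W : Tournament ℕ, W.indexE = (m : ℕ∞) ∧
      ∀ (V : Type*) (T : Tournament V), Countable V →
        T.indexE ≤ (m : ℕ∞) → T.Embeds W := by
  classical
  obtain ⟨enc, henc⟩ := Countable.exists_injective_nat (Fin m → Bool)
  obtain ⟨e⟩ : Nonempty (ℕ ≃ ℚ × (Fin m → Bool)) := inferInstance
  let L : Tournament ℕ :=
    { rel := fun p q => (e p).1 < (e q).1 ∨ ((e p).1 = (e q).1 ∧ enc (e p).2 < enc (e q).2)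
      irrefl := fun p => by simp
      total := fun p q hpq => by
        have hne : e p ≠ e q := fun hc => hpq (e.injective hc)
        rcases lt_trichotomy (e p).1 (e q).1 with h | h | h
        · exact Or.inl (Or.inl h)
        · have hsnd : (e p).2 ≠ (e q).2 := fun hc => hne (Prod.ext h hc)
          rcases lt_or_gt_of_ne (fun hc => hsnd (henc hc)) with h2 | h2
          · exact Or.inl (Or.inr ⟨h, h2⟩)
          · exact Or.inr (Or.inr ⟨h.symm, h2⟩)
        · exact Or.inr (Or.inl h)
      asymm := fun p q h1 h2 => by
        rcases h1 with h1 | ⟨h1, h1'⟩ <;> rcases h2 with h2 | ⟨h2, h2'⟩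
        · exact lt_asymm h1 h2
        · exact absurd (h1.trans_eq h2) (lt_irrefl _)
        · exact absurd (h2.trans_eq h1) (lt_irrefl _)
        · exact lt_asymm h1' h2' }
  have hLrel : ∀ p q, L.rel p q ↔
      ((e p).1 < (e q).1 ∨ ((e p).1 = (e q).1 ∧ enc (e p).2 < enc (e q).2)) :=
    fun _ _ => Iff.rfl
  have hLacyclic : L.IsAcyclic := by
    rintro x y z (h1 | ⟨h1, h1'⟩) (h2 | ⟨h2, h2'⟩)
    · exact Or.inl (h1.trans h2)
    · exact Or.inl (h1.trans_eq h2)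
    · exact Or.inl (h1.trans_lt h2)
    · exact Or.inr ⟨h1.trans h2, h1'.trans h2'⟩
  let Zs : List (Set ℕ) := (List.finRange m).map fun i => {p | (e p).2 i = true}
  have hZlen : Zs.length = m := by simp [Zs]
  have hWhas : Univ19.HasIdx (L.invSeq Zs) m :=
    ⟨Zs.reverse, by simp [hZlen], by rw [Univ19.invSeq_invSeq_reverse]; exact hLacyclic⟩
  refine ⟨L.invSeq Zs, le_antisymm (Univ19.indexE_le_of_hasIdx hWhas) ?_,
    fun V T hc hle => Univ19.univ_embed T m hle e enc henc L hLrel Zs rfl⟩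
  rcases Nat.eq_zero_or_pos m with rfl | hm
  · simp
  · obtain ⟨n₀, T₀, hT₀⟩ := Univ19.exists_fidx_exact m hm
    apply le_sInf
    rintro b ⟨Ws, hlb, hac⟩
    rw [← hlb]
    suffices h : m ≤ Ws.length by exact_mod_cast h
    by_contra hcon
    push_neg at hcon
    have hWlow : Univ19.HasIdx (L.invSeq Zs) (m - 1) :=
      Univ19.HasIdx.mono (by omega) ⟨Ws, rfl, hac⟩
    have hemb : T₀.Embeds (L.invSeq Zs) :=
      Univ19.univ_embed T₀ m
        (le_trans (Univ19.indexE_le_of_hasIdx (Univ19.hasIdx_fidx T₀)) (by rw [hT₀]))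
        e enc henc L hLrel Zs rfl
    have hfin := Univ19.fidx_le (Univ19.hasIdx_of_embeds hemb hWlow)
    omega
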